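/- Let A be a type and L a set of elements of FreeMonoid A. Define the syntactic congruence of L as the relation on FreeMonoid A given by u ≈ v iff for all x, y : FreeMonoid A, (x * u * y ∈ L ↔ x * v * y ∈ L). Then: (i) ≈ is a monoid congruence on FreeMonoid A; let Q be the quotient monoid and π : FreeMonoid A →* Q the projection; (ii) Q recognizes L via π, i.e., L = π ⁻¹' (π '' L); and (iii) the syntactic monoid divides every monoid recognizing L: for every monoid M, every monoid homomorphism φ : FreeMonoid A →* M, and every subset P ⊆ M with L = φ ⁻¹' P, there exists a surjective monoid homomorphism ψ from the range submonoid of φ onto Q such that ψ (φ w) = π w for every w : FreeMonoid A. -/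

import Mathlib

/-- The syntactic congruence of a language `L ⊆ FreeMonoid A` (given by
`u ≈ v ↔ ∀ x y, x * u * y ∈ L ↔ x * v * y ∈ L`) is a monoid congruence, its quotient
monoid recognizes `L` via the projection, and it divides every monoid recognizing `L`:
for every recognizer `(φ : FreeMonoid A →* M, P)` of `L` there is a surjective monoid
homomorphism from the range of `φ` onto the syntactic monoid compatible with the
projections. -/
theorem syntactic_monoid_recognizes_and_divides {A : Type*} (L : Set (FreeMonoid A)) :
    ∃ c : Con (FreeMonoid A),
      (∀ u v : FreeMonoid A, c u v ↔ ∀ x y : FreeMonoid A, (x * u * y ∈ L ↔ x * v * y ∈ L)) ∧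
      L = c.mk' ⁻¹' (c.mk' '' L) ∧
      (∀ (M : Type*) [Monoid M] (φ : FreeMonoid A →* M) (P : Set M), L = φ ⁻¹' P →
        ∃ ψ : MonoidHom.mrange φ →* c.Quotient, Function.Surjective ψ ∧
          ∀ w : FreeMonoid A, ψ ⟨φ w, MonoidHom.mem_mrange.mpr ⟨w, rfl⟩⟩ = c.mk' w) := by
  classical
  let c : Con (FreeMonoid A) :=
    { r := fun u v => ∀ x y, x * u * y ∈ L ↔ x * v * y ∈ L
      iseqv := ⟨fun u x y => Iff.rfl, fun h x y => (h x y).symm,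
        fun h1 h2 x y => (h1 x y).trans (h2 x y)⟩
      mul' := fun {a b p q} h1 h2 x y => by
        have e1 := h1 x (p * y)
        have e2 := h2 (x * b) y
        simp only [← mul_assoc] at e1
        rw [← mul_assoc, ← mul_assoc]
        exact e1.trans e2 }
  refine ⟨c, fun u v => Iff.rfl, ?_, ?_⟩
  · ext u
    constructor
    · intro hu; exact ⟨u, hu, rfl⟩
    · rintro ⟨v, hv, hvu⟩
      have hc : c v u := (Con.eq c).mp hvu
      simpa using (hc 1 1).mp (by simpa using hv)
  · intro M _ φ P hP
    have key : ∀ u v : FreeMonoid A, φ u = φ v → c u v := by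
      intro u v h x y
      have hw : ∀ w, w ∈ L ↔ φ w ∈ P := fun w => by rw [hP]; rfl
      rw [hw, hw, map_mul, map_mul, map_mul, map_mul, h]
    choose g hg using fun m : MonoidHom.mrange φ => MonoidHom.mem_mrange.mp m.2
    refine ⟨{ toFun := fun m => c.mk' (g m)
              map_one' := ?_
              map_mul' := ?_ }, ?_, ?_⟩
    · have h1 : φ (g 1) = φ 1 := by rw [hg]; simp
      simpa using (Con.eq c).mpr (key _ _ h1)
    · intro m n
      have h1 : φ (g (m * n)) = φ (g m * g n) := by
        rw [map_mul, hg, hg, hg]; rfl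
      simpa [map_mul] using (Con.eq c).mpr (key _ _ h1)
    · intro q
      induction q using Con.induction_on with
      | H w =>
        exact ⟨⟨φ w, MonoidHom.mem_mrange.mpr ⟨w, rfl⟩⟩, (Con.eq c).mpr (key _ _ (hg _))⟩
    · intro w
      exact (Con.eq c).mpr (key _ _ (hg _))
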